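/- Let W_1, ..., W_p be i.i.d. real random variables with a common distribution P_0 symmetric about 0. Fix j with |S^c| many null indices containing j, where S^c = [p] (all null). Define π_j = (1 + #{k : W_k ≤ -W_j})/p if W_j > 0 and π_j = 1 otherwise. Then for all t ∈ [0,1], P(π_j ≤ t) ≤ κ t, where κ = (√22 - 2)/(7√22 - 32) ≤ 3.24. -/

import Mathlib

open MeasureTheory ProbabilityTheory
open scoped ENNReal

/-- Intermediate p-values: `π_j = (1 + #{k : W_k ≤ -W_j})/p` if `W_j > 0`, else `1`. -/
noncomputable def interPval {p : ℕ} (W : Fin p → ℝ) (j : Fin p) : ℝ :=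
  if 0 < W j then (1 + (({k | W k ≤ -W j} : Set (Fin p)).ncard : ℝ)) / p else 1

namespace Stmt6Aux

open Finset
open scoped ENNReal

lemma kappa_den_pos : 0 < 7 * Real.sqrt 22 - 32 := by
  have h2 : Real.sqrt 22 ^ 2 = 22 := Real.sq_sqrt (by norm_num)
  have h0 : 0 ≤ Real.sqrt 22 := Real.sqrt_nonneg 22
  nlinarith

lemma kappa_ge_one : (1:ℝ) ≤ (Real.sqrt 22 - 2) / (7 * Real.sqrt 22 - 32) := by
  have h2 : Real.sqrt 22 ^ 2 = 22 := Real.sq_sqrt (by norm_num)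
  have h0 : 0 ≤ Real.sqrt 22 := Real.sqrt_nonneg 22
  rw [le_div_iff₀ kappa_den_pos]
  nlinarith

lemma kappa_le : (Real.sqrt 22 - 2) / (7 * Real.sqrt 22 - 32) ≤ 3.24 := by
  have h2 : Real.sqrt 22 ^ 2 = 22 := Real.sq_sqrt (by norm_num)
  have h0 : 0 ≤ Real.sqrt 22 := Real.sqrt_nonneg 22
  rw [div_le_iff₀ kappa_den_pos]
  nlinarith [sq_nonneg (21.68 * Real.sqrt 22 - 101.68)]

variable {p : ℕ}

open scoped Classical in
/-- The "B" event set. -/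
def Bset (M : ℕ) (j : Fin p) : Set (Fin p → ℝ) :=
  {x | 0 < x j ∧ (univ.filter fun k => x k ≤ -x j).card + 1 ≤ M}

open scoped Classical in
/-- The flipped event set. -/
def Cset (M : ℕ) (i : Fin p) : Set (Fin p → ℝ) :=
  {x | x i < 0 ∧ (univ.filter fun k => k ≠ i ∧ x k ≤ x i).card + 1 ≤ M}

lemma card_filter_eq_sum (P : Fin p → Prop) [DecidablePred P] :
    ((univ.filter P).card : ℝ) = ∑ k : Fin p, if P k then (1:ℝ) else 0 := by
  rw [Finset.card_filter]
  push_cast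
  congr 1

lemma card_le_iff_sum (P : Fin p → Prop) [DecidablePred P] (M : ℕ) :
    (univ.filter P).card + 1 ≤ M ↔ (∑ k : Fin p, if P k then (1:ℝ) else 0) + 1 ≤ (M:ℝ) := by
  rw [← card_filter_eq_sum P,
    show ((univ.filter P).card : ℝ) + 1 = (((univ.filter P).card + 1 : ℕ) : ℝ) by push_cast; ring]
  exact Nat.cast_le.symm

lemma measurable_sum_ite {P : Fin p → (Fin p → ℝ) → Prop} [∀ k x, Decidable (P k x)]
    (hP : ∀ k, MeasurableSet {x : Fin p → ℝ | P k x}) :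
    Measurable fun x : Fin p → ℝ => ∑ k : Fin p, if P k x then (1:ℝ) else 0 :=
  Finset.measurable_sum _ fun k _ =>
    Measurable.ite (hP k) measurable_const measurable_const

lemma measurableSet_Bset (M : ℕ) (j : Fin p) : MeasurableSet (Bset M j) := by
  classical
  have hset : Bset M j = {x : Fin p → ℝ | 0 < x j} ∩
      {x : Fin p → ℝ | (∑ k : Fin p, if x k ≤ -x j then (1:ℝ) else 0) + 1 ≤ (M:ℝ)} := by
    ext x
    simp only [Bset, Set.mem_setOf_eq, Set.mem_inter_iff, card_le_iff_sum]
  rw [hset]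
  refine (measurableSet_lt measurable_const (measurable_pi_apply j)).inter ?_
  refine measurableSet_le ?_ measurable_const
  exact (measurable_sum_ite (P := fun k x => x k ≤ -x j) (fun k =>
    measurableSet_le (measurable_pi_apply k) (measurable_pi_apply j).neg)).add measurable_const

lemma measurableSet_Cset (M : ℕ) (i : Fin p) : MeasurableSet (Cset M i) := by
  classical
  have hset : Cset M i = {x : Fin p → ℝ | x i < 0} ∩
      {x : Fin p → ℝ | (∑ k : Fin p, if k ≠ i ∧ x k ≤ x i then (1:ℝ) else 0) + 1 ≤ (M:ℝ)} := by
    ext x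
    simp only [Cset, Set.mem_setOf_eq, Set.mem_inter_iff, card_le_iff_sum]
  rw [hset]
  refine (measurableSet_lt (measurable_pi_apply i) measurable_const).inter ?_
  refine measurableSet_le ?_ measurable_const
  refine (measurable_sum_ite (P := fun k x => k ≠ i ∧ x k ≤ x i) (fun k => ?_)).add
    measurable_const
  have : {x : Fin p → ℝ | k ≠ i ∧ x k ≤ x i}
      = {x : Fin p → ℝ | k ≠ i} ∩ {x : Fin p → ℝ | x k ≤ x i} := rfl
  rw [this]
  exact (MeasurableSet.const _).inter
    (measurableSet_le (measurable_pi_apply k) (measurable_pi_apply i))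

open scoped Classical in
/-- The deterministic counting lemma: at most `M` indices can be in their `Cset`. -/
lemma card_mem_Cset_le (M : ℕ) (x : Fin p → ℝ) :
    (univ.filter fun i => x ∈ Cset M i).card ≤ M := by
  set D := univ.filter fun i => x ∈ Cset M i with hD
  rcases D.eq_empty_or_nonempty with h | h
  · simp [h]
  · obtain ⟨i₀, hi₀D, hmax⟩ := D.exists_max_image x h
    have hi₀ : x ∈ Cset M i₀ := (Finset.mem_filter.mp hi₀D).2
    have hsub : D.erase i₀ ⊆ univ.filter fun k => k ≠ i₀ ∧ x k ≤ x i₀ := by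
      intro i hi
      rcases Finset.mem_erase.mp hi with ⟨hne, hiD⟩
      exact Finset.mem_filter.mpr ⟨Finset.mem_univ i, hne, hmax i hiD⟩
    have h1 : D.card = (D.erase i₀).card + 1 := (Finset.card_erase_add_one hi₀D).symm
    have h2 : (D.erase i₀).card ≤ (univ.filter fun k => k ≠ i₀ ∧ x k ≤ x i₀).card :=
      Finset.card_le_card hsub
    have h3 := hi₀.2
    omega


section MeasurePart

variable (P₀ : Measure ℝ) [IsProbabilityMeasure P₀]

lemma measure_Bset_eq_Cset (hsym : P₀.map (fun x => -x) = P₀) (M : ℕ) (j : Fin p) :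
    Measure.pi (fun _ : Fin p => P₀) (Bset M j) = Measure.pi (fun _ : Fin p => P₀) (Cset M j) := by
  classical
  set f : Fin p → ℝ → ℝ := fun i y => if i = j then -y else y with hf
  have hfi : ∀ i, MeasurePreserving (f i) P₀ P₀ := by
    intro i
    by_cases h : i = j
    · subst h
      simp only [hf, if_pos rfl]
      exact ⟨measurable_neg, hsym⟩
    · simp only [hf, if_neg h]
      exact MeasurePreserving.id P₀
  have hMP : MeasurePreserving (fun (a : Fin p → ℝ) i => f i (a i))
      (Measure.pi fun _ : Fin p => P₀) (Measure.pi fun _ : Fin p => P₀) :=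
    measurePreserving_pi _ _ hfi
  have hpre : (fun (a : Fin p → ℝ) i => f i (a i)) ⁻¹' (Bset M j) = Cset M j := by
    ext x
    simp only [Set.mem_preimage, Bset, Cset, Set.mem_setOf_eq, hf]
    simp only [eq_self_iff_true, if_true, neg_neg, neg_pos]
    refine and_congr_right fun hneg => ?_
    have hfilter : (Finset.filter (fun k => (if k = j then -x k else x k) ≤ x j) Finset.univ)
        = Finset.filter (fun k => k ≠ j ∧ x k ≤ x j) Finset.univ := by
      apply Finset.filter_congr
      intro k _
      by_cases hk : k = j
      · subst hk
        simp only [eq_self_iff_true, if_true, ne_eq, not_true_eq_false, false_and, iff_false, not_le]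
        linarith
      · simp [hk]
    rw [hfilter]
  rw [← hpre, hMP.measure_preimage (measurableSet_Bset M j).nullMeasurableSet]


lemma measure_Cset_eq (M : ℕ) (i j : Fin p) :
    Measure.pi (fun _ : Fin p => P₀) (Cset M i) = Measure.pi (fun _ : Fin p => P₀) (Cset M j) := by
  classical
  set σ : Equiv.Perm (Fin p) := Equiv.swap i j with hσ
  have hMP : MeasurePreserving (MeasurableEquiv.arrowCongr' σ (MeasurableEquiv.refl ℝ))
      (Measure.pi fun _ : Fin p => P₀) (Measure.pi fun _ : Fin p => P₀) :=
    measurePreserving_arrowCongr' _ _ σ (MeasurableEquiv.refl ℝ)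
      (fun _ => MeasurePreserving.id P₀)
  have hco : ⇑(MeasurableEquiv.arrowCongr' σ (MeasurableEquiv.refl ℝ))
      = fun (x : Fin p → ℝ) k => x (σ.symm k) := rfl
  have hpre : (fun (x : Fin p → ℝ) k => x (σ.symm k)) ⁻¹' (Cset M j) = Cset M i := by
    ext x
    have hsymm : σ.symm = σ := by rw [hσ]; exact Equiv.symm_swap i j
    simp only [Set.mem_preimage, Cset, Set.mem_setOf_eq, hsymm]
    have hσj : σ j = i := Equiv.swap_apply_right i j
    simp only [hσj]
    refine and_congr_right fun hneg => ?_
    have hcard : (Finset.filter (fun k => k ≠ j ∧ x (σ k) ≤ x i) Finset.univ).card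
        = (Finset.filter (fun k => k ≠ i ∧ x k ≤ x i) Finset.univ).card := by
      apply Finset.card_equiv σ
      intro k
      simp only [Finset.mem_filter, Finset.mem_univ, true_and]
      have : σ k = i ↔ k = j := by
        constructor
        · intro h
          have h2 := congrArg σ.symm h
          rw [Equiv.symm_apply_apply, hsymm, hσ, Equiv.swap_apply_left] at h2
          exact h2
        · rintro rfl; exact hσj
      exact and_congr_left' (not_congr this).symm
    rw [hcard]
  calc Measure.pi (fun _ : Fin p => P₀) (Cset M i)
      = Measure.pi (fun _ : Fin p => P₀)
        ((fun (x : Fin p → ℝ) k => x (σ.symm k)) ⁻¹' (Cset M j)) := by rw [hpre]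
    _ = Measure.pi (fun _ : Fin p => P₀) (Cset M j) := by
        rw [← hco]
        exact hMP.measure_preimage (measurableSet_Cset M j).nullMeasurableSet

lemma measure_Cset_le (M : ℕ) (j : Fin p) (hp : 0 < p) :
    Measure.pi (fun _ : Fin p => P₀) (Cset M j) ≤ (M : ℝ≥0∞) / p := by
  classical
  set ν := Measure.pi (fun _ : Fin p => P₀) with hν
  have key : (p : ℝ≥0∞) * ν (Cset M j) ≤ M := by
    have h2 : ∑ i : Fin p, ν (Cset M i) = (p : ℝ≥0∞) * ν (Cset M j) := by
      rw [Finset.sum_congr rfl (fun i _ => measure_Cset_eq P₀ M i j)]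
      simp [Finset.sum_const, mul_comm, hν]
    rw [← h2]
    have h3 : ∑ i : Fin p, ν (Cset M i)
        = ∫⁻ x, ∑ i : Fin p, (Cset M i).indicator (1 : (Fin p → ℝ) → ℝ≥0∞) x ∂ν := by
      rw [lintegral_finset_sum (μ := ν) (f := fun i => (Cset M i).indicator 1) _
        (fun i _ => measurable_const.indicator (measurableSet_Cset M i))]
      simp_rw [lintegral_indicator_one (measurableSet_Cset M _)]
    rw [h3]
    have h4 : ∀ x : Fin p → ℝ,
        ∑ i : Fin p, (Cset M i).indicator (1 : (Fin p → ℝ) → ℝ≥0∞) x ≤ (M : ℝ≥0∞) := by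
      intro x
      have : ∑ i : Fin p, (Cset M i).indicator (1 : (Fin p → ℝ) → ℝ≥0∞) x
          = ((Finset.univ.filter fun i => x ∈ Cset M i).card : ℝ≥0∞) := by
        rw [Finset.card_filter]
        push_cast
        apply Finset.sum_congr rfl
        intro i _
        simp [Set.indicator_apply]
      rw [this]
      exact_mod_cast Nat.cast_le.mpr (card_mem_Cset_le M x)
    calc ∫⁻ x, ∑ i : Fin p, (Cset M i).indicator (1 : (Fin p → ℝ) → ℝ≥0∞) x ∂ν
        ≤ ∫⁻ _, (M : ℝ≥0∞) ∂ν := lintegral_mono h4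
      _ = M := by simp [lintegral_const]
  rw [ENNReal.le_div_iff_mul_le (Or.inl (by exact_mod_cast hp.ne'))
    (Or.inl (ENNReal.natCast_ne_top p))]
  rwa [mul_comm]

end MeasurePart

end Stmt6Aux
/-- Intermediate p-value bound (all-null case): if `W_1, ..., W_p` are i.i.d. with a
common distribution `P₀` symmetric about `0` and `p ≥ 2`, then for all `t ∈ [0,1]`,
`P(π_j ≤ t) ≤ κ t`, where `κ = (√22 - 2)/(7√22 - 32) ≤ 3.24`. -/
theorem stmt_6 {Ω : Type*} [MeasurableSpace Ω] (μ : Measure Ω)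
    [IsProbabilityMeasure μ] (p : ℕ) (hp : 2 ≤ p)
    (W : Fin p → Ω → ℝ) (hW : ∀ i, Measurable (W i))
    (P₀ : Measure ℝ) [IsProbabilityMeasure P₀]
    (hiid : iIndepFun W μ)
    (hlaw : ∀ i, μ.map (W i) = P₀)
    (hsym : P₀.map (fun x => -x) = P₀)
    (j : Fin p) (t : ℝ) (ht0 : 0 ≤ t) (ht1 : t ≤ 1) :
    μ {ω | interPval (fun i => W i ω) j ≤ t} ≤
      ENNReal.ofReal ((Real.sqrt 22 - 2) / (7 * Real.sqrt 22 - 32) * t) ∧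
    (Real.sqrt 22 - 2) / (7 * Real.sqrt 22 - 32) ≤ 3.24 := by
  classical
  refine ⟨?_, Stmt6Aux.kappa_le⟩
  have hppos : 0 < p := lt_of_lt_of_le two_pos hp
  have hppos' : (0:ℝ) < p := by exact_mod_cast hppos
  have hκ1 := Stmt6Aux.kappa_ge_one
  rcases eq_or_lt_of_le ht1 with h1 | h1
  · calc μ {ω | interPval (fun i => W i ω) j ≤ t}
        ≤ 1 := prob_le_one
      _ = ENNReal.ofReal 1 := by simp
      _ ≤ ENNReal.ofReal ((Real.sqrt 22 - 2) / (7 * Real.sqrt 22 - 32) * t) := by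
          apply ENNReal.ofReal_le_ofReal
          rw [← h1] at *
          nlinarith
  · set M := Nat.floor ((p:ℝ) * t) with hM
    have hWm : Measurable (fun ω (i : Fin p) => W i ω) := measurable_pi_lambda _ hW
    have hν : μ.map (fun ω (i : Fin p) => W i ω) = Measure.pi (fun _ : Fin p => P₀) := by
      symm
      refine Measure.pi_eq fun s hs => ?_
      rw [Measure.map_apply hWm (MeasurableSet.univ_pi hs)]
      have hpre : (fun ω (i : Fin p) => W i ω) ⁻¹' Set.pi Set.univ s = ⋂ i, W i ⁻¹' s i := by
        ext ω; simp [Set.mem_pi]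
      rw [hpre, show (⋂ i, W i ⁻¹' s i) = ⋂ i ∈ Finset.univ, W i ⁻¹' s i by simp]
      rw [hiid.measure_inter_preimage_eq_mul Finset.univ (fun i _ => hs i)]
      refine Finset.prod_congr rfl fun i _ => ?_
      rw [← hlaw i, Measure.map_apply (hW i) (hs i)]
    have hsub : {ω | interPval (fun i => W i ω) j ≤ t}
        ⊆ (fun ω (i : Fin p) => W i ω) ⁻¹' Stmt6Aux.Bset M j := by
      intro ω hω
      simp only [Set.mem_setOf_eq, interPval] at hω
      by_cases hpos : 0 < W j ω
      · rw [if_pos hpos] at hω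
        have hncard : ({k | W k ω ≤ -W j ω} : Set (Fin p)).ncard
            = (Finset.univ.filter fun k => W k ω ≤ -W j ω).card := by
          rw [Set.ncard_eq_toFinset_card']
          congr 1
          ext k
          simp
        rw [hncard] at hω
        refine ⟨hpos, ?_⟩
        apply Nat.le_floor
        have := (div_le_iff₀ hppos').mp hω
        push_cast
        linarith
      · rw [if_neg hpos] at hω
        linarith
    calc μ {ω | interPval (fun i => W i ω) j ≤ t}
        ≤ μ ((fun ω (i : Fin p) => W i ω) ⁻¹' Stmt6Aux.Bset M j) := measure_mono hsub
      _ = Measure.pi (fun _ : Fin p => P₀) (Stmt6Aux.Bset M j) := by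
          rw [← hν, Measure.map_apply hWm (Stmt6Aux.measurableSet_Bset M j)]
      _ = Measure.pi (fun _ : Fin p => P₀) (Stmt6Aux.Cset M j) :=
          Stmt6Aux.measure_Bset_eq_Cset P₀ hsym M j
      _ ≤ (M : ℝ≥0∞) / p := Stmt6Aux.measure_Cset_le P₀ M j hppos
      _ ≤ ENNReal.ofReal ((Real.sqrt 22 - 2) / (7 * Real.sqrt 22 - 32) * t) := by
          rw [← ENNReal.ofReal_natCast M, ← ENNReal.ofReal_natCast p,
            ← ENNReal.ofReal_div_of_pos hppos']
          apply ENNReal.ofReal_le_ofReal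
          have hMle : (M:ℝ) ≤ (p:ℝ) * t := Nat.floor_le (by positivity)
          rw [div_le_iff₀ hppos']
          nlinarith
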